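/- Let T be a tree on n vertices and let k be a positive integer with k ≤ n − γ(T). Then k ≤ Sb_k(T) ≤ 2k; that is, some set of at most 2k edges of T has removal increasing the domination number by exactly k, and no set of fewer than k edges does. -/

import Mathlib

/-- A finite set of vertices `D` is a dominating set of `G` if every vertex
is in `D` or adjacent to a vertex in `D`. -/
def SimpleGraph.IsDominatingSet {V : Type*} (G : SimpleGraph V) (D : Finset V) : Prop :=
  ∀ v : V, v ∈ D ∨ ∃ u ∈ D, G.Adj u v

/-- The domination number of `G`: the minimum cardinality of a dominating set. -/
noncomputable def SimpleGraph.domNum {V : Type*} (G : SimpleGraph V) : ℕ :=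
  sInf {n : ℕ | ∃ D : Finset V, G.IsDominatingSet D ∧ D.card = n}

/-- The `k`-synchronous bondage number of `G`: the minimum cardinality of a set of edges
whose deletion increases the domination number by exactly `k`.  (`Sb 1` is the classical
bondage number.) -/
noncomputable def SimpleGraph.synchBondage {V : Type*} (G : SimpleGraph V) (k : ℕ) : ℕ :=
  sInf {m : ℕ | ∃ E' : Finset (Sym2 V), ↑E' ⊆ G.edgeSet ∧
    (G.deleteEdges ↑E').domNum = G.domNum + k ∧ E'.card = m}

namespace SBAux

open SimpleGraph Finset

variable {V : Type*}

lemma dom_univ [Fintype V] (G : SimpleGraph V) :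
    G.IsDominatingSet (Finset.univ : Finset V) := fun v => Or.inl (Finset.mem_univ v)

lemma domNum_exists [Fintype V] (G : SimpleGraph V) :
    ∃ D : Finset V, G.IsDominatingSet D ∧ D.card = G.domNum := by
  have h : {n : ℕ | ∃ D : Finset V, G.IsDominatingSet D ∧ D.card = n}.Nonempty :=
    ⟨(Finset.univ : Finset V).card, Finset.univ, dom_univ G, rfl⟩
  exact Nat.sInf_mem h

lemma domNum_le_card_dom (G : SimpleGraph V) {D : Finset V}
    (hD : G.IsDominatingSet D) : G.domNum ≤ D.card :=
  Nat.sInf_le ⟨D, hD, rfl⟩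

lemma isDominatingSet_mono {G H : SimpleGraph V} (hle : H ≤ G) {D : Finset V}
    (hD : H.IsDominatingSet D) : G.IsDominatingSet D := fun v => by
  rcases hD v with h | ⟨u, hu, ha⟩
  · exact Or.inl h
  · exact Or.inr ⟨u, hu, hle ha⟩

lemma erase_dominates {G G' : SimpleGraph V} [DecidableEq V] (hle : G' ≤ G) {D : Finset V}
    (hD : G'.IsDominatingSet D) {u v : V} (huv : G.Adj u v) (hvD : v ∈ D)
    (hiso : ∀ y, ¬ G'.Adj u y) : G.IsDominatingSet (D.erase u) := by
  intro x
  by_cases hx : x = u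
  · exact Or.inr ⟨v, Finset.mem_erase.2 ⟨huv.ne', hvD⟩, hx ▸ huv.symm⟩
  · rcases hD x with h | ⟨d, hd, hadj⟩
    · exact Or.inl (Finset.mem_erase.2 ⟨hx, h⟩)
    · have hdu : d ≠ u := fun e => hiso x (e ▸ hadj)
      exact Or.inr ⟨d, Finset.mem_erase.2 ⟨hdu, hd⟩, hle hadj⟩

lemma mem_of_isolated {G' : SimpleGraph V} {D : Finset V} (hD : G'.IsDominatingSet D)
    {u : V} (hiso : ∀ y, ¬ G'.Adj u y) : u ∈ D := by
  rcases hD u with h | ⟨d, hd, hadj⟩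
  · exact h
  · exact absurd hadj.symm (hiso d)

lemma domNum_le_deleteEdges [Fintype V] (G : SimpleGraph V) (s : Set (Sym2 V)) :
    G.domNum ≤ (G.deleteEdges s).domNum := by
  obtain ⟨D, hD, hc⟩ := domNum_exists (G.deleteEdges s)
  rw [← hc]
  exact domNum_le_card_dom G (isDominatingSet_mono (deleteEdges_le s) hD)

lemma domNum_deleteEdges_single_le [Fintype V] (G : SimpleGraph V) (e : Sym2 V) :
    (G.deleteEdges {e}).domNum ≤ G.domNum + 1 := by
  classical
  induction e using Sym2.ind with
  | _ u v =>
  obtain ⟨D, hD, hcard⟩ := domNum_exists G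
  by_cases hu : u ∈ D
  · have hdom : (G.deleteEdges {s(u, v)}).IsDominatingSet (insert v D) := by
      intro x
      rcases hD x with hx | ⟨d, hd, ha⟩
      · exact Or.inl (Finset.mem_insert_of_mem hx)
      · by_cases he : s(d, x) = s(u, v)
        · rw [Sym2.eq_iff] at he
          rcases he with ⟨h1, h2⟩ | ⟨h1, h2⟩
          · exact Or.inl (h2 ▸ Finset.mem_insert_self v D)
          · exact Or.inl (Finset.mem_insert_of_mem (h2 ▸ hu))
        · exact Or.inr ⟨d, Finset.mem_insert_of_mem hd, by
            rw [SimpleGraph.deleteEdges_adj]; exact ⟨ha, by simpa using he⟩⟩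
    calc (G.deleteEdges {s(u, v)}).domNum ≤ (insert v D).card := domNum_le_card_dom _ hdom
      _ ≤ D.card + 1 := Finset.card_insert_le _ _
      _ = G.domNum + 1 := by rw [hcard]
  · have hdom : (G.deleteEdges {s(u, v)}).IsDominatingSet (insert u D) := by
      intro x
      rcases hD x with hx | ⟨d, hd, ha⟩
      · exact Or.inl (Finset.mem_insert_of_mem hx)
      · by_cases he : s(d, x) = s(u, v)
        · rw [Sym2.eq_iff] at he
          rcases he with ⟨h1, h2⟩ | ⟨h1, h2⟩
          · exact absurd (h1 ▸ hd) hu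
          · exact Or.inl (h2 ▸ Finset.mem_insert_self u D)
        · exact Or.inr ⟨d, Finset.mem_insert_of_mem hd, by
            rw [SimpleGraph.deleteEdges_adj]; exact ⟨ha, by simpa using he⟩⟩
    calc (G.deleteEdges {s(u, v)}).domNum ≤ (insert u D).card := domNum_le_card_dom _ hdom
      _ ≤ D.card + 1 := Finset.card_insert_le _ _
      _ = G.domNum + 1 := by rw [hcard]

lemma domNum_deleteEdges_le [Fintype V] (G : SimpleGraph V) (E : Finset (Sym2 V)) :
    (G.deleteEdges ↑E).domNum ≤ G.domNum + E.card := by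
  classical
  induction E using Finset.induction_on with
  | empty => simp
  | @insert a s ha ih =>
    have heq : G.deleteEdges ↑(insert a s) = (G.deleteEdges ↑s).deleteEdges {a} := by
      rw [SimpleGraph.deleteEdges_deleteEdges]
      congr 1
      simp [Set.union_singleton]
    rw [heq, Finset.card_insert_of_notMem ha]
    calc ((G.deleteEdges ↑s).deleteEdges {a}).domNum
        ≤ (G.deleteEdges ↑s).domNum + 1 := domNum_deleteEdges_single_le _ a
      _ ≤ G.domNum + s.card + 1 := by omega


/-- Lower bound when all edges at two adjacent vertices `u, v` are removed. -/
lemma add_one_le_domNum_deleteEdges [Fintype V] (G : SimpleGraph V) {u v : V}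
    (huv : G.Adj u v) (s : Set (Sym2 V))
    (hu : ∀ x, G.Adj u x → s(u, x) ∈ s) (hv : ∀ x, G.Adj v x → s(v, x) ∈ s) :
    G.domNum + 1 ≤ (G.deleteEdges s).domNum := by
  classical
  obtain ⟨D, hD, hcard⟩ := domNum_exists (G.deleteEdges s)
  have hiso : ∀ (a : V), (∀ x, G.Adj a x → s(a, x) ∈ s) → ∀ y, ¬ (G.deleteEdges s).Adj a y := by
    intro a ha y hy
    rw [SimpleGraph.deleteEdges_adj] at hy
    exact hy.2 (ha y hy.1)
  have huD : u ∈ D := mem_of_isolated hD (hiso u hu)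
  have hvD : v ∈ D := mem_of_isolated hD (hiso v hv)
  have hdom := erase_dominates (SimpleGraph.deleteEdges_le s) hD huv hvD (hiso u hu)
  have h1 := domNum_le_card_dom G hdom
  rw [Finset.card_erase_of_mem huD] at h1
  have h2 : 1 ≤ D.card := Finset.card_pos.2 ⟨u, huD⟩
  omega

/-- Lower bound for removing the pendant edge at `u` when `v` has another leaf
neighbour `x`. -/
lemma add_one_le_domNum_deleteEdges_sibling [Fintype V] (G : SimpleGraph V) {u v x : V}
    (huv : G.Adj u v) (hu : ∀ y, G.Adj u y → y = v)
    (hvx : G.Adj v x) (hxu : x ≠ u) (hx : ∀ y, G.Adj x y → y = v) :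
    G.domNum + 1 ≤ (G.deleteEdges {s(u, v)}).domNum := by
  classical
  set G' := G.deleteEdges {s(u, v)} with hG'
  obtain ⟨D, hD, hcard⟩ := domNum_exists G'
  have hiso : ∀ y, ¬ G'.Adj u y := by
    intro y hy
    rw [hG', SimpleGraph.deleteEdges_adj] at hy
    have : y = v := hu y hy.1
    exact hy.2 (by rw [this]; rfl)
  have huD : u ∈ D := mem_of_isolated hD hiso
  by_cases hvD : v ∈ D
  · have hdom := erase_dominates (SimpleGraph.deleteEdges_le _) hD huv hvD hiso
    have h1 := domNum_le_card_dom G hdom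
    rw [Finset.card_erase_of_mem huD] at h1
    have h2 : 1 ≤ D.card := Finset.card_pos.2 ⟨u, huD⟩
    omega
  · have hxD : x ∈ D := by
      rcases hD x with h | ⟨d, hd, hadj⟩
      · exact h
      · have : d = v := hx d (SimpleGraph.deleteEdges_le _ hadj).symm
        exact absurd (this ▸ hd) hvD
    have hdom : G.IsDominatingSet (insert v ((D.erase u).erase x)) := by
      intro y
      by_cases hy1 : y = u
      · exact Or.inr ⟨v, Finset.mem_insert_self _ _, hy1 ▸ huv.symm⟩
      by_cases hy2 : y = v
      · exact Or.inl (hy2 ▸ Finset.mem_insert_self _ _)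
      by_cases hy3 : y = x
      · exact Or.inr ⟨v, Finset.mem_insert_self _ _, hy3 ▸ hvx⟩
      rcases hD y with h | ⟨d, hd, hadj⟩
      · exact Or.inl (Finset.mem_insert_of_mem
          (Finset.mem_erase.2 ⟨hy3, Finset.mem_erase.2 ⟨hy1, h⟩⟩))
      · have hdu : d ≠ u := fun e => hiso y (e ▸ hadj)
        have hdx : d ≠ x := by
          intro e
          exact hy2 (hx y (e ▸ (SimpleGraph.deleteEdges_le _ hadj)))
        exact Or.inr ⟨d, Finset.mem_insert_of_mem
          (Finset.mem_erase.2 ⟨hdx, Finset.mem_erase.2 ⟨hdu, hd⟩⟩),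
          SimpleGraph.deleteEdges_le _ hadj⟩
    have h1 := domNum_le_card_dom G hdom
    have hxD' : x ∈ D.erase u := Finset.mem_erase.2 ⟨hxu, hxD⟩
    have hc1 : ((D.erase u).erase x).card = D.card - 1 - 1 := by
      rw [Finset.card_erase_of_mem hxD', Finset.card_erase_of_mem huD]
    have hc2 : (insert v ((D.erase u).erase x)).card ≤ ((D.erase u).erase x).card + 1 :=
      Finset.card_insert_le _ _
    have h2 : 2 ≤ D.card := Finset.one_lt_card.2 ⟨u, huD, x, hxD, fun e => hxu e.symm⟩
    omega

open SimpleGraph.Walk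






/-- The start of a maximum-length path in an acyclic graph has a unique neighbour. -/
lemma start_nbr_unique [DecidableEq V] {F : SimpleGraph V} (hF : F.IsAcyclic) {b v a : V}
    (h : F.Adj b v) (q : F.Walk v a) (hp : (Walk.cons h q).IsPath)
    (hmax : ∀ (c d : V) (r : F.Walk c d), r.IsPath → r.length ≤ (Walk.cons h q).length) :
    ∀ x, F.Adj b x → x = v := by
  intro x hx
  by_contra hxv
  have hxb : x ≠ b := fun e => F.loopless.irrefl b (e ▸ hx)
  have hbq : b ∉ q.support := ((Walk.cons_isPath_iff h q).1 hp).2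
  have hq : q.IsPath := ((Walk.cons_isPath_iff h q).1 hp).1
  by_cases hxs : x ∈ (Walk.cons h q).support
  · have hxq : x ∈ q.support := by
      rcases List.mem_cons.mp (by simpa [Walk.support_cons] using hxs) with h' | h'
      · exact absurd h' hxb
      · exact h'
    have hcyc : (Walk.cons hx.symm (Walk.cons h (q.takeUntil x hxq))).IsCycle := by
      rw [Walk.cons_isCycle_iff]
      constructor
      · rw [Walk.cons_isPath_iff]
        exact ⟨hq.takeUntil hxq, fun hb => hbq (Walk.support_takeUntil_subset q hxq hb)⟩
      · rw [Walk.edges_cons]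
        intro hmem
        rcases List.mem_cons.mp hmem with he | he
        · rw [Sym2.eq_iff] at he
          rcases he with ⟨h1, _⟩ | ⟨h1, _⟩
          · exact hxb h1
          · exact hxv h1
        · exact hbq (Walk.support_takeUntil_subset q hxq
            (Walk.snd_mem_support_of_mem_edges _ he))
    exact hF _ hcyc
  · have hpath : (Walk.cons hx.symm (Walk.cons h q)).IsPath :=
      (Walk.cons_isPath_iff _ _).2 ⟨hp, hxs⟩
    have hlen := hmax _ _ _ hpath
    rw [Walk.length_cons] at hlen
    omega

/-- A neighbour of the second vertex of a path that lies on the path is either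
the first or the third vertex (in an acyclic graph). -/
lemma mid_nbr [DecidableEq V] {F : SimpleGraph V} (hF : F.IsAcyclic) {b v w a : V}
    (h : F.Adj b v) (h₂ : F.Adj v w) (q₂ : F.Walk w a)
    (hp : (Walk.cons h (Walk.cons h₂ q₂)).IsPath)
    {x : V} (hvx : F.Adj v x) (hxs : x ∈ (Walk.cons h (Walk.cons h₂ q₂)).support)
    (hxb : x ≠ b) : x = w := by
  by_contra hxw
  have hxv : x ≠ v := hvx.ne'
  have hq : (Walk.cons h₂ q₂).IsPath := ((Walk.cons_isPath_iff _ _).1 hp).1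
  have hvq₂ : v ∉ q₂.support := ((Walk.cons_isPath_iff _ _).1 hq).2
  have hxq : x ∈ (Walk.cons h₂ q₂).support := by
    rw [Walk.support_cons] at hxs
    rcases List.mem_cons.mp hxs with h' | h'
    · exact absurd h' hxb
    · exact h'
  have hcyc : (Walk.cons hvx.symm ((Walk.cons h₂ q₂).takeUntil x hxq)).IsCycle := by
    rw [Walk.cons_isCycle_iff]
    refine ⟨hq.takeUntil hxq, ?_⟩
    intro hmem
    have hmem' : s(x, v) ∈ (Walk.cons h₂ q₂).edges :=
      Walk.edges_takeUntil_subset _ hxq hmem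
    rw [Walk.edges_cons] at hmem'
    rcases List.mem_cons.mp hmem' with he | he
    · rw [Sym2.eq_iff] at he
      rcases he with ⟨h1, _⟩ | ⟨h1, _⟩
      · exact hxv h1
      · exact hxw h1
    · exact hvq₂ (Walk.snd_mem_support_of_mem_edges _ he)
  exact hF _ hcyc

/-- In a finite acyclic graph with at least one edge there is a leaf `u` (with
neighbour `v`) such that either `v` has another leaf neighbour, or `v` has at
most one neighbour besides `u`. -/
lemma exists_good_leaf [Fintype V] [DecidableEq V] {F : SimpleGraph V} (hF : F.IsAcyclic)
    (hne : F.edgeSet.Nonempty) :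
    ∃ u v : V, F.Adj u v ∧ (∀ x, F.Adj u x → x = v) ∧
      ((∃ x, F.Adj v x ∧ x ≠ u ∧ ∀ y, F.Adj x y → y = v) ∨
       (∃ w, F.Adj v w ∧ w ≠ u ∧ ∀ x, F.Adj v x → x = u ∨ x = w) ∨
       (∀ x, F.Adj v x → x = u)) := by
  classical
  obtain ⟨a0, b0, hab⟩ : ∃ a b, F.Adj a b := by
    obtain ⟨e, he⟩ := hne
    induction e using Sym2.ind with
    | _ a b => exact ⟨a, b, he⟩
  set S : Set ℕ := {n | ∃ (c d : V) (r : F.Walk c d), r.IsPath ∧ r.length = n} with hS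
  have h1S : 1 ∈ S := ⟨a0, b0, Walk.cons hab Walk.nil,
    by simp [Walk.cons_isPath_iff, hab.ne], rfl⟩
  have hbdd : BddAbove S := ⟨Fintype.card V, by
    rintro n ⟨c, d, r, hr, hl⟩
    exact hl ▸ hr.length_lt.le⟩
  obtain ⟨c, d, r, hr, hrlen⟩ := Nat.sSup_mem ⟨1, h1S⟩ hbdd
  have hmax : ∀ (c' d' : V) (r' : F.Walk c' d'), r'.IsPath → r'.length ≤ r.length :=
    fun c' d' r' hr' => hrlen ▸ le_csSup hbdd ⟨c', d', r', hr', rfl⟩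
  have hL1 : 1 ≤ r.length := hrlen ▸ le_csSup hbdd h1S
  cases r with
  | nil => simp at hL1
  | @cons _ v _ h q =>
    refine ⟨c, v, h, start_nbr_unique hF h q hr hmax, ?_⟩
    by_cases hA : ∃ x, F.Adj v x ∧ x ≠ c ∧ ∀ y, F.Adj x y → y = v
    · exact Or.inl hA
    · have hsupp : ∀ x, F.Adj v x → x ≠ c → x ∈ (Walk.cons h q).support := by
        intro x hvx hxc
        by_contra hxs
        have hxq : x ∉ q.support := fun hh => hxs (by
          rw [Walk.support_cons]; exact List.mem_cons_of_mem _ hh)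
        have hpath : (Walk.cons hvx.symm q).IsPath :=
          (Walk.cons_isPath_iff _ _).2 ⟨((Walk.cons_isPath_iff _ _).1 hr).1, hxq⟩
        have hmax' : ∀ (c' d' : V) (r' : F.Walk c' d'), r'.IsPath →
            r'.length ≤ (Walk.cons hvx.symm q).length := by
          intro c' d' r' hr'
          have := hmax c' d' r' hr'
          simpa [Walk.length_cons] using this
        exact hA ⟨x, hvx, hxc, start_nbr_unique hF hvx.symm q hpath hmax'⟩
      cases q with
      | nil =>
        refine Or.inr (Or.inr ?_)
        intro x hvx
        by_contra hxc
        have hmem := hsupp x hvx hxc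
        simp only [Walk.support_cons, Walk.support_nil] at hmem
        rcases List.mem_cons.mp hmem with h1 | h1
        · exact hxc h1
        · rcases List.mem_cons.mp h1 with h2 | h2
          · exact F.loopless.irrefl _ (h2 ▸ hvx)
          · simp at h2
      | @cons _ w _ h₂ q₂ =>
        have hcq : c ∉ (Walk.cons h₂ q₂).support := ((Walk.cons_isPath_iff _ _).1 hr).2
        have hwc : w ≠ c := by
          intro e
          apply hcq
          rw [Walk.support_cons]
          exact e ▸ List.mem_cons_of_mem _ q₂.start_mem_support
        refine Or.inr (Or.inl ⟨w, h₂, hwc, ?_⟩)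
        intro x hvx
        by_cases hxc : x = c
        · exact Or.inl hxc
        · exact Or.inr (mid_nbr hF h h₂ q₂ hr hvx (hsupp x hvx hxc) hxc)


/-- The key step: in a finite forest with at least one edge, some set of at most
two edges has deletion increasing the domination number by exactly one. -/
lemma step [Fintype V] {F : SimpleGraph V} (hF : F.IsAcyclic) (hne : F.edgeSet.Nonempty) :
    ∃ E' : Finset (Sym2 V), ↑E' ⊆ F.edgeSet ∧ E'.card ≤ 2 ∧
      (F.deleteEdges ↑E').domNum = F.domNum + 1 := by
  classical
  obtain ⟨u, v, huv, hu, hcase⟩ := exists_good_leaf hF hne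
  have hsub1 : ↑({s(u, v)} : Finset (Sym2 V)) ⊆ F.edgeSet := by
    simp only [Finset.coe_singleton, Set.singleton_subset_iff, SimpleGraph.mem_edgeSet]
    exact huv
  have hco1 : (↑({s(u, v)} : Finset (Sym2 V)) : Set (Sym2 V)) = {s(u, v)} :=
    Finset.coe_singleton _
  rcases hcase with ⟨x, hvx, hxu, hx⟩ | ⟨w, hvw, hwu, hv⟩ | hv
  · -- sibling leaf case
    refine ⟨{s(u, v)}, hsub1, by simp, ?_⟩
    rw [hco1]
    exact le_antisymm (domNum_deleteEdges_single_le F _)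
      (add_one_le_domNum_deleteEdges_sibling F huv hu hvx hxu hx)
  · -- v has exactly one other neighbour w
    by_cases h1 : (F.deleteEdges {s(u, v)}).domNum = F.domNum + 1
    · exact ⟨{s(u, v)}, hsub1, by simp, by rw [hco1]; exact h1⟩
    · have hle := domNum_deleteEdges_single_le F s(u, v)
      have hge := domNum_le_deleteEdges F {s(u, v)}
      have heq : (F.deleteEdges {s(u, v)}).domNum = F.domNum := by omega
      refine ⟨{s(u, v), s(v, w)}, ?_, ?_, ?_⟩
      · intro e he
        simp only [Finset.coe_insert, Finset.coe_singleton, Set.mem_insert_iff,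
          Set.mem_singleton_iff] at he
        rcases he with rfl | rfl
        · exact huv
        · exact hvw
      · exact (Finset.card_insert_le _ _).trans (by simp)
      · have hco : (↑({s(u, v), s(v, w)} : Finset (Sym2 V)) : Set (Sym2 V))
            = {s(u, v), s(v, w)} := by simp
        rw [hco]
        refine le_antisymm ?_ ?_
        · have hsplit : F.deleteEdges {s(u, v), s(v, w)}
              = (F.deleteEdges {s(u, v)}).deleteEdges {s(v, w)} := by
            rw [SimpleGraph.deleteEdges_deleteEdges, Set.singleton_union]
          rw [hsplit]
          calc ((F.deleteEdges {s(u, v)}).deleteEdges {s(v, w)}).domNum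
              ≤ (F.deleteEdges {s(u, v)}).domNum + 1 := domNum_deleteEdges_single_le _ _
            _ = F.domNum + 1 := by rw [heq]
        · refine add_one_le_domNum_deleteEdges F huv _ ?_ ?_
          · intro y hy
            rw [hu y hy]
            exact Set.mem_insert _ _
          · intro y hy
            rcases hv y hy with rfl | rfl
            · rw [Sym2.eq_swap]
              exact Set.mem_insert _ _
            · exact Set.mem_insert_of_mem _ rfl
  · -- v has no other neighbour
    refine ⟨{s(u, v)}, hsub1, by simp, ?_⟩
    rw [hco1]
    refine le_antisymm (domNum_deleteEdges_single_le F _)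
      (add_one_le_domNum_deleteEdges F huv _ ?_ ?_)
    · intro y hy
      rw [hu y hy]
      exact rfl
    · intro y hy
      rw [hv y hy, Sym2.eq_swap]
      exact rfl

lemma acyclic_mono {G H : SimpleGraph V} (hle : H ≤ G) (hG : G.IsAcyclic) : H.IsAcyclic :=
  fun _v c hc => hG (c.mapLe hle) (Walk.IsCycle.mapLe hle hc)

lemma exists_edge_of_domNum_lt [Fintype V] (G : SimpleGraph V)
    (hlt : G.domNum < Fintype.card V) : G.edgeSet.Nonempty := by
  obtain ⟨D, hD, hcard⟩ := domNum_exists G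
  have hDne : D ≠ Finset.univ := by
    intro e
    rw [e, Finset.card_univ] at hcard
    omega
  obtain ⟨w, hw⟩ : ∃ w, w ∉ D := by
    by_contra hcon
    push_neg at hcon
    exact hDne (Finset.eq_univ_iff_forall.2 hcon)
  rcases hD w with h | ⟨d, hd, hadj⟩
  · exact absurd h hw
  · exact ⟨s(d, w), hadj⟩

lemma domNum_le_card [Fintype V] (G : SimpleGraph V) : G.domNum ≤ Fintype.card V := by
  have := domNum_le_card_dom G (dom_univ G)
  simpa using this

end SBAux

open SBAux in
/-- for a tree `T` on `n` vertices and `1 ≤ k ≤ n − γ(T)`,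
`k ≤ Sb_k(T) ≤ 2k`: some set of at most `2k` edges has deletion increasing the
domination number by exactly `k`, and no set of fewer than `k` edges does. -/
theorem synchBondage_tree_bounds {V : Type*} [Fintype V] (T : SimpleGraph V)
    (hconn : T.Connected) (hacyc : T.IsAcyclic) (k : ℕ) (hk : 1 ≤ k)
    (hkn : k ≤ Fintype.card V - T.domNum) :
    (∃ E' : Finset (Sym2 V), ↑E' ⊆ T.edgeSet ∧ E'.card ≤ 2 * k ∧
      (T.deleteEdges ↑E').domNum = T.domNum + k) ∧
    k ≤ T.synchBondage k ∧ T.synchBondage k ≤ 2 * k := by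
  classical
  have hcard : T.domNum ≤ Fintype.card V := domNum_le_card T
  have hγk : T.domNum + k ≤ Fintype.card V := by omega
  have key : ∀ j, j ≤ k → ∃ E : Finset (Sym2 V), ↑E ⊆ T.edgeSet ∧ E.card ≤ 2 * j ∧
      (T.deleteEdges ↑E).domNum = T.domNum + j := by
    intro j
    induction j with
    | zero =>
      intro _
      exact ⟨∅, by simp, by simp, by simp⟩
    | succ j ih =>
      intro hjk
      obtain ⟨E, hEsub, hEcard, hEγ⟩ := ih (Nat.le_of_succ_le hjk)
      have hFac : (T.deleteEdges ↑E).IsAcyclic :=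
        acyclic_mono (SimpleGraph.deleteEdges_le _) hacyc
      have hFne : (T.deleteEdges ↑E).edgeSet.Nonempty := by
        apply exists_edge_of_domNum_lt
        rw [hEγ]
        omega
      obtain ⟨E', hE'sub, hE'card, hE'γ⟩ := step hFac hFne
      refine ⟨E ∪ E', ?_, ?_, ?_⟩
      · intro e he
        rw [Finset.coe_union] at he
        rcases he with he | he
        · exact hEsub he
        · have := hE'sub he
          rw [SimpleGraph.edgeSet_deleteEdges] at this
          exact this.1
      · calc (E ∪ E').card ≤ E.card + E'.card := Finset.card_union_le _ _
          _ ≤ 2 * (j + 1) := by omega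
      · have hsplit : T.deleteEdges ↑(E ∪ E') = (T.deleteEdges ↑E).deleteEdges ↑E' := by
          rw [SimpleGraph.deleteEdges_deleteEdges, Finset.coe_union]
        rw [hsplit, hE'γ, hEγ]
        omega
  obtain ⟨E, hsub, hcard2, hγ⟩ := key k le_rfl
  have hmem : E.card ∈ {m : ℕ | ∃ E' : Finset (Sym2 V), ↑E' ⊆ T.edgeSet ∧
      (T.deleteEdges ↑E').domNum = T.domNum + k ∧ E'.card = m} := ⟨E, hsub, hγ, rfl⟩
  refine ⟨⟨E, hsub, hcard2, hγ⟩, ?_, ?_⟩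
  · obtain ⟨E₀, hsub₀, hγ₀, hcard₀⟩ := Nat.sInf_mem ⟨E.card, hmem⟩
    have hub := domNum_deleteEdges_le T E₀
    rw [hγ₀] at hub
    show k ≤ sInf {m : ℕ | ∃ E' : Finset (Sym2 V), ↑E' ⊆ T.edgeSet ∧
      (T.deleteEdges ↑E').domNum = T.domNum + k ∧ E'.card = m}
    omega
  · exact (Nat.sInf_le hmem).trans hcard2
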